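/- Let q > 1, α = 0, β = √(2/(q−1)) and u > 0 a C⁴ solution of −Δ²u = u^{−q} in ℝⁿ, n ≥ 3. If for every R > 0 the inequality −Δu/u + β u^{−(q+1)/2} ≤ C/R² holds on B_R with C independent of R, then Δu ≥ √(2/(q−1)) u^{−(q−1)/2} everywhere in ℝⁿ. -/
import Mathlib


open Real Finset

variable {n : ℕ}

/-- Partial derivative in the `i`-th coordinate direction. -/
noncomputable def pd (i : Fin n) (f : EuclideanSpace ℝ (Fin n) → ℝ) :
    EuclideanSpace ℝ (Fin n) → ℝ :=
  fun x => fderiv ℝ f x (EuclideanSpace.single i 1)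

/-- Euclidean Laplacian. -/
noncomputable def lap (f : EuclideanSpace ℝ (Fin n) → ℝ) :
    EuclideanSpace ℝ (Fin n) → ℝ :=
  fun x => ∑ i, pd i (pd i f) x

/-- Squared norm of the gradient, `|∇f|²`. -/
noncomputable def gradSq (f : EuclideanSpace ℝ (Fin n) → ℝ) :
    EuclideanSpace ℝ (Fin n) → ℝ :=
  fun x => ∑ i, (pd i f x) ^ 2

/-- Guo–Wei inequality from the local estimate with `α = 0`. -/
theorem stmt18 (hn : 3 ≤ n) (q C : ℝ) (hq : 1 < q) (hC : 0 < C)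
    (u : EuclideanSpace ℝ (Fin n) → ℝ) (hu : ContDiff ℝ 4 u)
    (hupos : ∀ x, 0 < u x)
    (heq : ∀ x, -lap (lap u) x = u x ^ (-q))
    (x₀ : EuclideanSpace ℝ (Fin n))
    (hloc : ∀ R : ℝ, 0 < R → ∀ x ∈ Metric.ball x₀ R,
      -lap u x / u x + Real.sqrt (2 / (q - 1)) * u x ^ (-(q + 1) / 2) ≤ C / R ^ 2) :
    ∀ x, lap u x ≥ Real.sqrt (2 / (q - 1)) * u x ^ (-(q - 1) / 2) := by
  intro x
  set β := Real.sqrt (2 / (q - 1)) with hβ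
  set A := -lap u x / u x + β * u x ^ (-(q + 1) / 2) with hA
  have hAle : A ≤ 0 := by
    by_contra h
    push_neg at h
    set R := max (dist x x₀ + 1) (Real.sqrt (2 * C / A)) with hR
    have hR1 : dist x x₀ + 1 ≤ R := le_max_left _ _
    have hRpos : 0 < R := lt_of_lt_of_le (by positivity) hR1
    have hxball : x ∈ Metric.ball x₀ R := by
      rw [Metric.mem_ball]
      linarith
    have hle := hloc R hRpos x hxball
    have hR2 : Real.sqrt (2 * C / A) ≤ R := le_max_right _ _
    have hsq : 2 * C / A ≤ R ^ 2 := by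
      have := Real.sq_sqrt (by positivity : (0:ℝ) ≤ 2 * C / A)
      nlinarith [Real.sqrt_nonneg (2 * C / A)]
    have hCR : C / R ^ 2 < A := by
      rw [div_lt_iff₀ (by positivity)]
      have h2 : 2 * C ≤ A * R ^ 2 := by
        rw [div_le_iff₀ h] at hsq; linarith
      linarith
    exact absurd hle (not_le.mpr hCR)
  have hux := hupos x
  have key : β * u x ^ (-(q + 1) / 2) ≤ lap u x / u x := by
    rw [hA, neg_div] at hAle
    linarith
  have h2 : β * u x ^ (-(q + 1) / 2) * u x ≤ lap u x := by
    have := mul_le_mul_of_nonneg_right key (le_of_lt hux)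
    rwa [div_mul_cancel₀ _ (ne_of_gt hux)] at this
  have hrw : u x ^ (-(q + 1) / 2) * u x = u x ^ (-(q - 1) / 2) := by
    rw [show (-(q - 1) / 2) = (-(q + 1) / 2) + 1 by ring, Real.rpow_add hux,
      Real.rpow_one]
  calc β * u x ^ (-(q - 1) / 2)
      = β * (u x ^ (-(q + 1) / 2) * u x) := by rw [hrw]
    _ = β * u x ^ (-(q + 1) / 2) * u x := by ring
    _ ≤ lap u x := h2
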